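/- For each candidate k = 1,…,N, let n_k ≥ 1 past execution times t_{k,1}, …, t_{k,n_k} > 0 be given and let Et_k = (t_{k,1} + … + t_{k,n_k})/n_k be their mean. Suppose the candidates are ordered so that p_1/Et_1 ≥ p_2/Et_2 ≥ … ≥ p_N/Et_N. Then for every permutation σ of {1,…,N}, the expected solving time computed with the mean execution times satisfies E_{Et}(id) ≤ E_{Et}(σ). -/

import Mathlib

open Finset

/-- Expected solving time of examining candidates `1,…,N` in the order given by the
permutation `σ` of `{1,…,N}`. -/
noncomputable def solveTime (N : ℕ) (p t : ℕ → ℝ) (σ : Equiv.Perm ℕ) : ℝ :=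
  ∑ k ∈ Finset.Icc 1 N, (∑ l ∈ Finset.Icc 1 k, t (σ l)) *
    (∏ j ∈ Finset.Icc 1 (k - 1), (1 - p (σ j))) * p (σ k)

/-- Mean of the `n_k` past execution times `t_{k,1}, …, t_{k,n_k}` of candidate `k`:
`Et_k = (t_{k,1} + … + t_{k,n_k})/n_k`. -/
noncomputable def meanTime (nk : ℕ → ℕ) (t : ℕ → ℕ → ℝ) (k : ℕ) : ℝ :=
  (∑ j ∈ Finset.Icc 1 (nk k), t k j) / (nk k : ℝ)

namespace SolAux

/-- the set of inversions of `σ` inside `Icc 1 N` -/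
def Inv (N : ℕ) (σ : Equiv.Perm ℕ) : Finset (ℕ × ℕ) :=
  (Icc 1 N ×ˢ Icc 1 N).filter fun q => q.1 < q.2 ∧ σ q.2 < σ q.1

lemma maps_Icc {N : ℕ} (σ : Equiv.Perm ℕ) (hσ : ∀ i, i ∉ Icc 1 N → σ i = i)
    {i : ℕ} (hi : i ∈ Icc 1 N) : σ i ∈ Icc 1 N := by
  by_contra h
  have h2 : σ (σ i) = σ i := hσ _ h
  have h3 : σ i = i := σ.injective h2
  rw [← h3] at hi
  exact h hi

lemma swap_supp (m : ℕ) : {x | Equiv.swap (m+1) (m+2) x ≠ x} ⊆ ({m+1, m+2} : Set ℕ) := by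
  intro x hx
  by_contra hmem
  simp only [Set.mem_insert_iff, Set.mem_singleton_iff, not_or] at hmem
  exact hx (Equiv.swap_apply_of_ne_of_ne hmem.1 hmem.2)

/-- the adjacent-swap cost identity -/
lemma swap_cost (N : ℕ) (p Et : ℕ → ℝ) (m : ℕ) (hm : m + 2 ≤ N) (σ : Equiv.Perm ℕ) :
    solveTime N p Et ((Equiv.swap (m+1) (m+2)).trans σ) =
      solveTime N p Et σ +
        (∏ j ∈ Icc 1 m, (1 - p (σ j))) *
          (Et (σ (m+2)) * p (σ (m+1)) - Et (σ (m+1)) * p (σ (m+2))) := by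
  set s := Equiv.swap (m+1) (m+2) with hs
  set σ' := s.trans σ with hσ'
  have hval : ∀ x, x ≠ m + 1 → x ≠ m + 2 → σ' x = σ x := by
    intro x h1 h2
    simp only [hσ', Equiv.trans_apply, hs, Equiv.swap_apply_of_ne_of_ne h1 h2]
  have hv1 : σ' (m+1) = σ (m+2) := by
    simp [hσ', hs, Equiv.trans_apply]
  have hv2 : σ' (m+2) = σ (m+1) := by
    simp [hσ', hs, Equiv.trans_apply]
  set term : Equiv.Perm ℕ → ℕ → ℝ := fun τ k =>
    (∑ l ∈ Icc 1 k, Et (τ l)) * (∏ j ∈ Icc 1 (k - 1), (1 - p (τ j))) * p (τ k) with hterm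
  have hterm_eq : ∀ k, k ≠ m+1 → k ≠ m+2 → term σ' k = term σ k := by
    intro k hk1 hk2
    rcases lt_or_ge k (m+1) with hlt | hge
    · have h1 : ∑ l ∈ Icc 1 k, Et (σ' l) = ∑ l ∈ Icc 1 k, Et (σ l) :=
        Finset.sum_congr rfl fun l hl => by
          have := (mem_Icc.mp hl).2
          rw [hval l (by omega) (by omega)]
      have h2 : ∏ j ∈ Icc 1 (k-1), (1 - p (σ' j)) = ∏ j ∈ Icc 1 (k-1), (1 - p (σ j)) :=
        Finset.prod_congr rfl fun j hj => by
          have := (mem_Icc.mp hj).2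
          rw [hval j (by omega) (by omega)]
      simp only [hterm, h1, h2, hval k hk1 hk2]
    · have hk3 : m + 3 ≤ k := by omega
      have h1 : ∑ l ∈ Icc 1 k, Et (σ' l) = ∑ l ∈ Icc 1 k, Et (σ l) := by
        have hsupp : {x | s x ≠ x} ⊆ ↑(Icc 1 k) := by
          intro x hx
          have := swap_supp m hx
          simp only [Set.mem_insert_iff, Set.mem_singleton_iff] at this
          simp only [Finset.coe_Icc, Set.mem_Icc]
          omega
        have := Equiv.Perm.sum_comp s (Icc 1 k) (fun l => Et (σ l)) hsupp
        simpa [hσ', Equiv.trans_apply] using this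
      have h2 : ∏ j ∈ Icc 1 (k-1), (1 - p (σ' j)) = ∏ j ∈ Icc 1 (k-1), (1 - p (σ j)) := by
        have hsupp : {x | s x ≠ x} ⊆ ↑(Icc 1 (k-1)) := by
          intro x hx
          have := swap_supp m hx
          simp only [Set.mem_insert_iff, Set.mem_singleton_iff] at this
          simp only [Finset.coe_Icc, Set.mem_Icc]
          omega
        have := Equiv.Perm.prod_comp s (Icc 1 (k-1)) (fun j => (1 - p (σ j))) hsupp
        simpa [hσ', Equiv.trans_apply] using this
      simp only [hterm, h1, h2, hval k hk1 hk2]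
  have hsplit : solveTime N p Et σ' - solveTime N p Et σ
      = ∑ k ∈ Icc 1 N, (term σ' k - term σ k) := by
    rw [Finset.sum_sub_distrib]
    rfl
  have hsub : ({m+1, m+2} : Finset ℕ) ⊆ Icc 1 N := by
    intro x hx
    simp only [mem_insert, mem_singleton] at hx
    rw [mem_Icc]
    omega
  have h2 : ∑ k ∈ Icc 1 N, (term σ' k - term σ k)
      = ∑ k ∈ ({m+1, m+2} : Finset ℕ), (term σ' k - term σ k) := by
    refine (Finset.sum_subset hsub fun k _ hk => ?_).symm
    simp only [mem_insert, mem_singleton, not_or] at hk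
    rw [hterm_eq k hk.1 hk.2]
    ring
  have h3 : ∑ k ∈ ({m+1, m+2} : Finset ℕ), (term σ' k - term σ k)
      = (term σ' (m+1) - term σ (m+1)) + (term σ' (m+2) - term σ (m+2)) :=
    Finset.sum_pair (by omega)
  -- compute the four terms
  set T := ∑ l ∈ Icc 1 m, Et (σ l) with hT
  set C := ∏ j ∈ Icc 1 m, (1 - p (σ j)) with hC
  have hcongr1 : ∑ l ∈ Icc 1 m, Et (σ' l) = T :=
    Finset.sum_congr rfl fun l hl => by
      have := (mem_Icc.mp hl).2
      rw [hval l (by omega) (by omega)]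
  have hcongr2 : ∏ j ∈ Icc 1 m, (1 - p (σ' j)) = C :=
    Finset.prod_congr rfl fun j hj => by
      have := (mem_Icc.mp hj).2
      rw [hval j (by omega) (by omega)]
  have d1 : m + 1 - 1 = m := rfl
  have d2 : m + 2 - 1 = m + 1 := rfl
  have F1 : ∑ l ∈ Icc 1 (m+1), Et (σ l) = T + Et (σ (m+1)) :=
    Finset.sum_Icc_succ_top (by omega) _
  have F1' : ∑ l ∈ Icc 1 (m+1), Et (σ' l) = T + Et (σ (m+2)) := by
    rw [Finset.sum_Icc_succ_top (by omega : 1 ≤ m + 1), hcongr1, hv1]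
  have F2 : ∑ l ∈ Icc 1 (m+2), Et (σ l) = T + Et (σ (m+1)) + Et (σ (m+2)) := by
    rw [show m + 2 = (m+1) + 1 from rfl, Finset.sum_Icc_succ_top (by omega : 1 ≤ m + 1 + 1), F1]
  have F2' : ∑ l ∈ Icc 1 (m+2), Et (σ' l) = T + Et (σ (m+2)) + Et (σ (m+1)) := by
    rw [show m + 2 = (m+1) + 1 from rfl, Finset.sum_Icc_succ_top (by omega : 1 ≤ m + 1 + 1), F1',
      hv2]
  have G1 : ∏ j ∈ Icc 1 (m+1), (1 - p (σ j)) = C * (1 - p (σ (m+1))) :=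
    Finset.prod_Icc_succ_top (by omega) _
  have G1' : ∏ j ∈ Icc 1 (m+1), (1 - p (σ' j)) = C * (1 - p (σ (m+2))) := by
    rw [Finset.prod_Icc_succ_top (by omega : 1 ≤ m + 1), hcongr2, hv1]
  have e1 : term σ (m+1) = (T + Et (σ (m+1))) * C * p (σ (m+1)) := by
    simp only [hterm, d1, F1, hC]
  have e1' : term σ' (m+1) = (T + Et (σ (m+2))) * C * p (σ (m+2)) := by
    simp only [hterm, d1, F1', hcongr2, hv1]
  have e2 : term σ (m+2) = (T + Et (σ (m+1)) + Et (σ (m+2))) * (C * (1 - p (σ (m+1)))) *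
      p (σ (m+2)) := by
    simp only [hterm, d2, F2, G1]
  have e2' : term σ' (m+2) = (T + Et (σ (m+2)) + Et (σ (m+1))) * (C * (1 - p (σ (m+2)))) *
      p (σ (m+1)) := by
    simp only [hterm, d2, F2', G1', hv2]
  have : solveTime N p Et σ' - solveTime N p Et σ
      = C * (Et (σ (m+2)) * p (σ (m+1)) - Et (σ (m+1)) * p (σ (m+2))) := by
    rw [hsplit, h2, h3, e1, e1', e2, e2']
    ring
  linarith [this]

lemma inv_decrease (N m : ℕ) (hm : m + 2 ≤ N) (σ : Equiv.Perm ℕ)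
    (hinv : σ (m+2) < σ (m+1)) :
    (Inv N ((Equiv.swap (m+1) (m+2)).trans σ)).card < (Inv N σ).card := by
  set s := Equiv.swap (m+1) (m+2) with hs
  have seval : ∀ x, s x = if x = m+1 then m+2 else if x = m+2 then m+1 else x := by
    intro x
    rw [hs, Equiv.swap_apply_def]
  have hmem0 : ((m+1, m+2) : ℕ × ℕ) ∈ Inv N σ := by
    simp only [Inv, mem_filter, mem_product, mem_Icc]
    exact ⟨⟨⟨by omega, by omega⟩, ⟨by omega, by omega⟩⟩, by omega, hinv⟩
  have hcard : (Inv N (s.trans σ)).card ≤ ((Inv N σ).erase (m+1,m+2)).card := by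
    apply Finset.card_le_card_of_injOn (fun q => (s q.1, s q.2))
    · intro q hq
      replace hq : q ∈ Inv N (s.trans σ) := hq
      rw [Inv, Finset.mem_filter] at hq
      simp only [Finset.mem_coe, Inv, mem_filter, mem_product, mem_Icc, Equiv.trans_apply] at hq
      obtain ⟨⟨⟨hq1, hq2⟩, hq3, hq4⟩, hlt, hσ'⟩ := hq
      have hne : ¬ (q.1 = m+1 ∧ q.2 = m+2) := by
        rintro ⟨h1, h2⟩
        rw [h1, h2, seval, seval] at hσ'
        split_ifs at hσ' <;> omega
      rw [Finset.mem_coe, Finset.mem_erase]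
      refine ⟨?_, ?_⟩
      · intro hcontra
        have e1 : s q.1 = m+1 := congrArg Prod.fst hcontra
        have e2 : s q.2 = m+2 := congrArg Prod.snd hcontra
        rw [seval] at e1
        rw [seval] at e2
        split_ifs at e1 <;> split_ifs at e2 <;> omega
      · simp only [Inv, mem_filter, mem_product, mem_Icc]
        refine ⟨⟨⟨?_, ?_⟩, ?_, ?_⟩, ?_, hσ'⟩ <;>
          · rw [seval]
            try rw [seval]
            split_ifs <;> omega
    · intro a _ b _ hab
      have e1 : s a.1 = s b.1 := congrArg Prod.fst hab
      have e2 : s a.2 = s b.2 := congrArg Prod.snd hab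
      exact Prod.ext (s.injective e1) (s.injective e2)
  calc (Inv N (s.trans σ)).card ≤ ((Inv N σ).erase (m+1,m+2)).card := hcard
    _ < (Inv N σ).card := Finset.card_erase_lt_of_mem hmem0

lemma exists_adj (N : ℕ) (σ : Equiv.Perm ℕ) (h : (Inv N σ).Nonempty) :
    ∃ m, m + 2 ≤ N ∧ σ (m+2) < σ (m+1) := by
  by_contra hc
  push_neg at hc
  obtain ⟨⟨k, l⟩, hmem⟩ := h
  simp only [Inv, mem_filter, mem_product, mem_Icc] at hmem
  obtain ⟨⟨⟨hk1, hk2⟩, hl1, hl2⟩, hkl, hσ⟩ := hmem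
  have mono : ∀ d, k + d ≤ N → σ k ≤ σ (k + d) := by
    intro d
    induction d with
    | zero => intro _; exact le_refl _
    | succ d ih =>
      intro hd
      have h1 : σ k ≤ σ (k + d) := ih (by omega)
      have h2 := hc (k + d - 1) (by omega)
      have e1 : k + d - 1 + 1 = k + d := by omega
      have e2 : k + d - 1 + 2 = k + d + 1 := by omega
      rw [e1, e2] at h2
      have e3 : k + (d + 1) = k + d + 1 := by omega
      rw [e3]
      omega
  have := mono (l - k) (by omega)
  rw [show k + (l - k) = l from by omega] at this
  omega

lemma inv_zero_eq (N : ℕ) (σ : Equiv.Perm ℕ) (hσ : ∀ i, i ∉ Icc 1 N → σ i = i)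
    (h : Inv N σ = ∅) : ∀ i ∈ Icc 1 N, σ i = i := by
  have hmono : ∀ k l, k ∈ Icc 1 N → l ∈ Icc 1 N → k < l → σ k < σ l := by
    intro k l hk hl hkl
    have hne : σ k ≠ σ l := fun e => by have := σ.injective e; omega
    by_contra hc
    have hmem : (k, l) ∈ Inv N σ := by
      simp only [Inv, mem_filter, mem_product]
      exact ⟨⟨hk, hl⟩, hkl, by omega⟩
    rw [h] at hmem
    exact absurd hmem (notMem_empty _)
  have hlb : ∀ d, 1 + d ≤ N → 1 + d ≤ σ (1 + d) := by
    intro d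
    induction d with
    | zero =>
      intro h1
      simp only [Nat.add_zero]
      have := maps_Icc σ hσ (show (1:ℕ) ∈ Icc 1 N by rw [mem_Icc]; omega)
      rw [mem_Icc] at this
      omega
    | succ d ih =>
      intro h1
      have h2 := ih (by omega)
      have h3 : σ (1 + d) < σ (1 + d + 1) :=
        hmono _ _ (by rw [mem_Icc]; omega) (by rw [mem_Icc]; omega) (by omega)
      rw [show 1 + (d + 1) = 1 + d + 1 from by omega]
      omega
  have hlbAll : ∀ x ∈ Icc 1 N, x ≤ σ x := by
    intro x hx
    rw [mem_Icc] at hx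
    have := hlb (x - 1) (by omega)
    rw [show 1 + (x - 1) = x from by omega] at this
    exact this
  have hsupp : {x | σ x ≠ x} ⊆ ↑(Icc 1 N) := by
    intro x hx
    by_contra hmem
    exact hx (hσ x hmem)
  have hsum : ∑ x ∈ Icc 1 N, σ x = ∑ x ∈ Icc 1 N, x :=
    Equiv.Perm.sum_comp σ (Icc 1 N) (fun x => x) hsupp
  have := (Finset.sum_eq_sum_iff_of_le hlbAll).mp hsum.symm
  intro i hi
  exact (this i hi).symm


lemma main_aux (N : ℕ) (p Et : ℕ → ℝ)
    (hp : ∀ i ∈ Icc 1 N, p i ∈ Set.Icc (0:ℝ) 1)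
    (hord : ∀ k l, k ∈ Icc 1 N → l ∈ Icc 1 N → k ≤ l → p l * Et k ≤ p k * Et l) :
    ∀ n (σ : Equiv.Perm ℕ), (∀ i, i ∉ Icc 1 N → σ i = i) → (Inv N σ).card ≤ n →
      solveTime N p Et (Equiv.refl ℕ) ≤ solveTime N p Et σ := by
  intro n
  induction n with
  | zero =>
    intro σ hσ hcard
    have hempty : Inv N σ = ∅ := card_eq_zero.mp (Nat.le_zero.mp hcard)
    have hid := inv_zero_eq N σ hσ hempty
    have heq : solveTime N p Et σ = solveTime N p Et (Equiv.refl ℕ) := by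
      unfold solveTime
      refine Finset.sum_congr rfl fun k hk => ?_
      rw [mem_Icc] at hk
      have h1 : ∑ l ∈ Icc 1 k, Et (σ l) = ∑ l ∈ Icc 1 k, Et ((Equiv.refl ℕ) l) :=
        Finset.sum_congr rfl fun l hl => by
          rw [mem_Icc] at hl
          rw [hid l (by rw [mem_Icc]; omega)]
          rfl
      have h2 : ∏ j ∈ Icc 1 (k-1), (1 - p (σ j)) = ∏ j ∈ Icc 1 (k-1), (1 - p ((Equiv.refl ℕ) j)) :=
        Finset.prod_congr rfl fun j hj => by
          rw [mem_Icc] at hj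
          rw [hid j (by rw [mem_Icc]; omega)]
          rfl
      rw [h1, h2, hid k (by rw [mem_Icc]; omega)]
      rfl
    rw [heq]
  | succ n ih =>
    intro σ hσ hcard
    by_cases hc : (Inv N σ).card ≤ n
    · exact ih σ hσ hc
    · have hpos : 0 < (Inv N σ).card := by omega
      have hne : (Inv N σ).Nonempty := card_pos.mp hpos
      obtain ⟨m, hm, hinv⟩ := exists_adj N σ hne
      set σ' := (Equiv.swap (m+1) (m+2)).trans σ with hσ'def
      have hσ'fix : ∀ i, i ∉ Icc 1 N → σ' i = i := by
        intro i hiN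
        rw [mem_Icc] at hiN
        have hsw : Equiv.swap (m+1) (m+2) i = i :=
          Equiv.swap_apply_of_ne_of_ne (by omega) (by omega)
        rw [hσ'def]
        simp only [Equiv.trans_apply, hsw]
        exact hσ i (by rw [mem_Icc]; omega)
      have hclt : (Inv N σ').card < (Inv N σ).card := inv_decrease N m hm σ hinv
      have h1 := ih σ' hσ'fix (by omega)
      have h2 := swap_cost N p Et m hm σ
      have hCnonneg : 0 ≤ ∏ j ∈ Icc 1 m, (1 - p (σ j)) := by
        refine Finset.prod_nonneg fun j hj => ?_
        rw [mem_Icc] at hj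
        have hjN : σ j ∈ Icc 1 N := maps_Icc σ hσ (by rw [mem_Icc]; omega)
        have := hp _ hjN
        rw [Set.mem_Icc] at this
        linarith [this.2]
      have ha : σ (m+1) ∈ Icc 1 N := maps_Icc σ hσ (by rw [mem_Icc]; omega)
      have hb : σ (m+2) ∈ Icc 1 N := maps_Icc σ hσ (by rw [mem_Icc]; omega)
      have hmul : p (σ (m+1)) * Et (σ (m+2)) ≤ p (σ (m+2)) * Et (σ (m+1)) :=
        hord _ _ hb ha (le_of_lt hinv)
      have hstep : solveTime N p Et σ' ≤ solveTime N p Et σ := by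
        rw [hσ'def, h2]
        have hfac : (∏ j ∈ Icc 1 m, (1 - p (σ j))) *
            (Et (σ (m+2)) * p (σ (m+1)) - Et (σ (m+1)) * p (σ (m+2))) ≤ 0 :=
          mul_nonpos_of_nonneg_of_nonpos hCnonneg (by linarith)
        linarith
      linarith

end SolAux


/-- If the candidates are ordered so that `p_1/Et_1 ≥ p_2/Et_2 ≥ … ≥ p_N/Et_N`, where `Et_k`
is the mean of the past execution times of candidate `k`, then for every permutation `σ` of
`{1,…,N}` the expected solving time computed with the mean execution times satisfies
`E_{Et}(id) ≤ E_{Et}(σ)`. -/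
theorem solomonoff_strategy_optimal_mean_times
    (N : ℕ) (hN : 1 ≤ N) (p : ℕ → ℝ) (nk : ℕ → ℕ) (t : ℕ → ℕ → ℝ)
    (hp : ∀ i ∈ Finset.Icc 1 N, p i ∈ Set.Icc (0 : ℝ) 1)
    (hnk : ∀ k ∈ Finset.Icc 1 N, 1 ≤ nk k)
    (ht : ∀ k ∈ Finset.Icc 1 N, ∀ j ∈ Finset.Icc 1 (nk k), 0 < t k j)
    (hord : ∀ i ∈ Finset.Icc 1 (N - 1),
      p (i + 1) / meanTime nk t (i + 1) ≤ p i / meanTime nk t i)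
    (σ : Equiv.Perm ℕ) (hσ : ∀ i, i ∉ Finset.Icc 1 N → σ i = i) :
    solveTime N p (meanTime nk t) (Equiv.refl ℕ) ≤ solveTime N p (meanTime nk t) σ := by
  set Et := meanTime nk t with hEtdef
  have hEt : ∀ i ∈ Icc 1 N, 0 < Et i := by
    intro i hi
    rw [hEtdef]
    unfold meanTime
    apply div_pos
    · refine Finset.sum_pos (fun j hj => ht i hi j hj) ?_
      exact Finset.nonempty_Icc.mpr (hnk i hi)
    · exact_mod_cast Nat.lt_of_lt_of_le Nat.zero_lt_one (hnk i hi)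
  have hrate : ∀ d k, 1 ≤ k → k + d ≤ N → p (k + d) / Et (k + d) ≤ p k / Et k := by
    intro d
    induction d with
    | zero => intro k _ _; simp only [Nat.add_zero]; exact le_refl _
    | succ d ih =>
      intro k hk1 hkd
      have h1 : p (k + d) / Et (k + d) ≤ p k / Et k := ih k hk1 (by omega)
      have h2 := hord (k + d) (by rw [mem_Icc]; omega)
      rw [show k + (d + 1) = k + d + 1 from by omega]
      exact le_trans h2 h1
  have hordm : ∀ k l, k ∈ Icc 1 N → l ∈ Icc 1 N → k ≤ l → p l * Et k ≤ p k * Et l := by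
    intro k l hk hl hkl
    rw [mem_Icc] at hk hl
    have := hrate (l - k) k (by omega) (by omega)
    rw [show k + (l - k) = l from by omega] at this
    exact (div_le_div_iff₀ (hEt l (by rw [mem_Icc]; omega)) (hEt k (by rw [mem_Icc]; omega))).mp this
  exact SolAux.main_aux N p Et hp hordm (SolAux.Inv N σ).card σ hσ le_rfl
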